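/- Let H = (V, E) be a linear hypergraph with at most n edges, each with at most n vertices, where n is a perfect square, and suppose every vertex has degree at least √n. Suppose there exists a vertex v with d(v) = √n such that |adj(u)| = n for all u in adj(v) ∪ {v}. Then for every edge E of H and every vertex u not in E, there is exactly one vertex of E that is not adjacent to u. -/

import Mathlib

open scoped Classical

/-- A finite hypergraph is given by its finite set of edges, each a finite set of vertices.
`Linear E` means any two distinct edges share at most one vertex. -/
def HG.Linear {V : Type*} (E : Finset (Finset V)) : Prop :=
  ∀ e₁ ∈ E, ∀ e₂ ∈ E, e₁ ≠ e₂ → (e₁ ∩ e₂).card ≤ 1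

/-- The degree of a vertex: the number of edges containing it. -/
noncomputable def HG.deg {V : Type*} (E : Finset (Finset V)) (v : V) : ℕ :=
  (E.filter (fun e => v ∈ e)).card

/-- The vertex set of the hypergraph: the union of its edges. -/
noncomputable def HG.verts {V : Type*} (E : Finset (Finset V)) : Finset V := E.sup id

/-- The adjacency of a vertex `v`: vertices distinct from `v` sharing an edge with `v`. -/
noncomputable def HG.adj {V : Type*} (E : Finset (Finset V)) (v : V) : Finset V :=
  (HG.verts E).filter (fun u => u ≠ v ∧ ∃ e ∈ E, v ∈ e ∧ u ∈ e)

/-- A proper coloring: vertices lying in a common edge receive distinct colors. -/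
def HG.Proper {V : Type*} {m : ℕ} (E : Finset (Finset V)) (f : V → Fin m) : Prop :=
  ∀ e ∈ E, ∀ u ∈ e, ∀ w ∈ e, u ≠ w → f u ≠ f w

namespace HGAux

variable {V : Type*} [DecidableEq V]

lemma mem_verts_iff {E : Finset (Finset V)} {u : V} :
    u ∈ HG.verts E ↔ ∃ e ∈ E, u ∈ e := by
  simp [HG.verts]

lemma mem_verts_of_mem {E : Finset (Finset V)} {e : Finset V} {u : V}
    (he : e ∈ E) (hu : u ∈ e) : u ∈ HG.verts E :=
  mem_verts_iff.2 ⟨e, he, hu⟩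

lemma sq_helper {k : ℕ} (hk : 1 ≤ k) : k * (k - 1) + k = k ^ 2 := by
  cases k with
  | zero => simp
  | succ n => simp only [Nat.succ_sub_one, pow_two]; ring

lemma mem_adj {E : Finset (Finset V)} {w u : V} :
    u ∈ HG.adj E w ↔ u ∈ HG.verts E ∧ u ≠ w ∧ ∃ e ∈ E, w ∈ e ∧ u ∈ e := by
  simp [HG.adj]

/-- `HG.deg` as a `card` of a filter with the ambient decidability instance. -/
lemma deg_def {E : Finset (Finset V)} (u : V) :
    HG.deg E u = (E.filter (fun e => u ∈ e)).card := by
  unfold HG.deg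
  congr 1
  ext f
  simp

/-- Linearity, restated with the ambient decidability instance on intersections. -/
lemma linear' {E : Finset (Finset V)} (hlin : HG.Linear E) :
    ∀ e₁ ∈ E, ∀ e₂ ∈ E, e₁ ≠ e₂ → (e₁ ∩ e₂).card ≤ 1 := by
  intro e₁ h₁ e₂ h₂ hne
  have h := hlin e₁ h₁ e₂ h₂ hne
  convert h using 2
  ext x
  simp

/-- Two distinct common points force two edges of a linear hypergraph to be equal. -/
lemma eq_of_two_mem {E : Finset (Finset V)} (hlin : HG.Linear E) {e₁ e₂ : Finset V}
    (h₁ : e₁ ∈ E) (h₂ : e₂ ∈ E) {x y : V} (hxy : x ≠ y)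
    (hx₁ : x ∈ e₁) (hy₁ : y ∈ e₁) (hx₂ : x ∈ e₂) (hy₂ : y ∈ e₂) : e₁ = e₂ := by
  by_contra hne
  have h1 := linear' hlin e₁ h₁ e₂ h₂ hne
  have h2 : 1 < (e₁ ∩ e₂).card :=
    Finset.one_lt_card.2 ⟨x, Finset.mem_inter.2 ⟨hx₁, hx₂⟩,
      y, Finset.mem_inter.2 ⟨hy₁, hy₂⟩, hxy⟩
  omega

/-- The adjacency of `w` is the disjoint union of `e \ {w}` over edges `e` through `w`. -/
lemma adj_eq_biUnion {E : Finset (Finset V)} (w : V) :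
    HG.adj E w = (E.filter (fun f => w ∈ f)).biUnion (fun f => f.erase w) := by
  ext u
  simp only [mem_adj, Finset.mem_biUnion, Finset.mem_filter, Finset.mem_erase]
  constructor
  · rintro ⟨_, hne, e, he, hwe, hue⟩
    exact ⟨e, ⟨he, hwe⟩, hne, hue⟩
  · rintro ⟨e, ⟨he, hwe⟩, hne, hue⟩
    exact ⟨mem_verts_of_mem he hue, hne, e, he, hwe, hue⟩

lemma card_adj {E : Finset (Finset V)} (hlin : HG.Linear E) (w : V) :
    (HG.adj E w).card = ∑ f ∈ E.filter (fun f => w ∈ f), (f.card - 1) := by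
  rw [adj_eq_biUnion, Finset.card_biUnion]
  · refine Finset.sum_congr rfl fun f hf => ?_
    rw [Finset.card_erase_of_mem (Finset.mem_filter.1 hf).2]
  · intro f₁ h₁ f₂ h₂ hne
    simp only [Finset.mem_coe, Finset.mem_filter] at h₁ h₂
    rw [Function.onFun, Finset.disjoint_left]
    intro u hu₁ hu₂
    rw [Finset.mem_erase] at hu₁ hu₂
    exact hne (eq_of_two_mem hlin h₁.1 h₂.1 hu₁.1 hu₁.2 h₁.2 hu₂.2 h₂.2)

lemma sum_eq_of_le {α : Type*} {s : Finset α} {f : α → ℕ} {c : ℕ}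
    (h : ∀ i ∈ s, f i ≤ c) (hs : s.card * c ≤ ∑ i ∈ s, f i) :
    ∀ i ∈ s, f i = c := by
  intro i hi
  by_contra hne
  have hlt : f i < c := lt_of_le_of_ne (h i hi) hne
  have h2 : ∑ j ∈ s, f j < ∑ _j ∈ s, c := Finset.sum_lt_sum h ⟨i, hi, hlt⟩
  rw [Finset.sum_const, smul_eq_mul] at h2
  omega

lemma sum_eq_of_ge {α : Type*} {s : Finset α} {f : α → ℕ} {c : ℕ}
    (h : ∀ i ∈ s, c ≤ f i) (hs : ∑ i ∈ s, f i ≤ s.card * c) :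
    ∀ i ∈ s, f i = c := by
  intro i hi
  by_contra hne
  have hlt : c < f i := lt_of_le_of_ne (h i hi) (Ne.symm hne)
  have h2 : ∑ _j ∈ s, c < ∑ j ∈ s, f j := Finset.sum_lt_sum h ⟨i, hi, hlt⟩
  rw [Finset.sum_const, smul_eq_mul] at h2
  omega

/-- Core counting lemma: if `w` has degree `k` and `k²` neighbours, then every
edge through `w` has `k+1` vertices, every neighbour of `w` has degree `k`,
and every edge of `E` meets every edge through `w`. -/
lemma key {k : ℕ} (hk : 2 ≤ k) {E : Finset (Finset V)} (hlin : HG.Linear E)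
    (hE : E.card ≤ k ^ 2)
    (hdeg : ∀ u ∈ HG.verts E, k ≤ HG.deg E u)
    {w : V} (hdw : HG.deg E w = k) (haw : (HG.adj E w).card = k ^ 2) :
    (∀ f ∈ E, w ∈ f → f.card = k + 1) ∧
    (∀ u ∈ HG.adj E w, HG.deg E u = k) ∧
    (∀ f ∈ E, w ∈ f → ∀ g ∈ E, (g ∩ f).Nonempty) := by
  set A : Finset (Finset V) := E.filter (fun f => w ∈ f) with hA_def
  have hA_card : A.card = k := by rw [hA_def, ← deg_def]; exact hdw
  have hA_sub : A ⊆ E := Finset.filter_subset _ _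
  have hA_mem : ∀ f ∈ A, f ∈ E ∧ w ∈ f := fun f hf => Finset.mem_filter.1 hf
  have hsumA : ∑ f ∈ A, (f.card - 1) = k ^ 2 := by
    rw [← card_adj hlin w, haw]
  -- The family of edges through a point of `e₁.erase w`, other than `e₁` itself.
  -- These are pairwise disjoint from each other (over distinct points) and from `A`.
  have hB :
      ∀ e₁ ∈ A,
        ∃ B : Finset (Finset V), B ⊆ E ∧ Disjoint A B ∧
          B.card = ∑ u ∈ e₁.erase w, (HG.deg E u - 1) ∧
          (∀ g ∈ B, ∃ u ∈ e₁.erase w, u ∈ g) ∧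
          (∀ g ∈ E, w ∉ g → (∃ u ∈ e₁.erase w, u ∈ g) → g ∈ B) := by
    intro e₁ he₁
    obtain ⟨he₁E, hwe₁⟩ := hA_mem e₁ he₁
    refine ⟨(e₁.erase w).biUnion (fun u => (E.filter (fun f => u ∈ f)).erase e₁),
      ?_, ?_, ?_, ?_, ?_⟩
    · intro g hg
      obtain ⟨u, _, hg'⟩ := Finset.mem_biUnion.1 hg
      exact (Finset.filter_subset _ _) (Finset.erase_subset _ _ hg')
    · rw [Finset.disjoint_left]
      intro f hfA hfB
      obtain ⟨u, hu, hf'⟩ := Finset.mem_biUnion.1 hfB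
      rw [Finset.mem_erase] at hf' hu
      obtain ⟨hfE, hwf⟩ := hA_mem f hfA
      exact hf'.1 (eq_of_two_mem hlin hfE he₁E hu.1
        ((Finset.mem_filter.1 hf'.2).2) hwf hu.2 hwe₁)
    · rw [Finset.card_biUnion]
      · refine Finset.sum_congr rfl fun u hu => ?_
        rw [Finset.mem_erase] at hu
        rw [Finset.card_erase_of_mem (Finset.mem_filter.2 ⟨he₁E, hu.2⟩), deg_def]
      · intro u₁ h₁ u₂ h₂ hne
        rw [Finset.mem_coe, Finset.mem_erase] at h₁ h₂
        rw [Function.onFun, Finset.disjoint_left]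
        intro f hf₁ hf₂
        rw [Finset.mem_erase, Finset.mem_filter] at hf₁ hf₂
        exact hf₁.1 (eq_of_two_mem hlin hf₁.2.1 he₁E hne hf₁.2.2 hf₂.2.2 h₁.2 h₂.2)
    · intro g hg
      obtain ⟨u, hu, hg'⟩ := Finset.mem_biUnion.1 hg
      exact ⟨u, hu, (Finset.mem_filter.1 (Finset.mem_erase.1 hg').2).2⟩
    · intro g hgE hwg ⟨u, hu, hug⟩
      refine Finset.mem_biUnion.2 ⟨u, hu, Finset.mem_erase.2 ⟨?_, Finset.mem_filter.2 ⟨hgE, hug⟩⟩⟩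
      rintro rfl; exact hwg hwe₁
  -- basic bound: for every edge `e₁` through `w`,
  -- `k + ∑_{u ∈ e₁ \ {w}} (deg u - 1) ≤ k²`.
  have hbound : ∀ e₁ ∈ A, k + ∑ u ∈ e₁.erase w, (HG.deg E u - 1) ≤ k ^ 2 := by
    intro e₁ he₁
    obtain ⟨B, hBE, hdisj, hBcard, _, _⟩ := hB e₁ he₁
    have := Finset.card_le_card (Finset.union_subset hA_sub hBE)
    rw [Finset.card_union_of_disjoint hdisj, hA_card, hBcard] at this
    omega
  have hdeg_erase : ∀ e₁ ∈ A, ∀ u ∈ e₁.erase w, k ≤ HG.deg E u := by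
    intro e₁ he₁ u hu
    exact hdeg u (mem_verts_of_mem (hA_mem e₁ he₁).1 (Finset.erase_subset _ _ hu))
  -- every edge through `w` has at most `k+1` vertices
  have hsize_le : ∀ e₁ ∈ A, e₁.card - 1 ≤ k := by
    intro e₁ he₁
    have h1 := hbound e₁ he₁
    have h2 : (e₁.card - 1) * (k - 1) ≤ ∑ u ∈ e₁.erase w, (HG.deg E u - 1) := by
      have := Finset.card_nsmul_le_sum (e₁.erase w) (fun u => HG.deg E u - 1) (k - 1)
        (fun u hu => by
          show k - 1 ≤ HG.deg E u - 1
          have := hdeg_erase e₁ he₁ u hu; omega)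
      rwa [Finset.card_erase_of_mem (hA_mem e₁ he₁).2, smul_eq_mul] at this
    have h4 := sq_helper (k := k) (by omega)
    have h3 : (e₁.card - 1) * (k - 1) ≤ k * (k - 1) := by linarith
    exact Nat.le_of_mul_le_mul_right h3 (by omega)
  -- hence every edge through `w` has exactly `k+1` vertices
  have hsize_eq : ∀ e₁ ∈ A, e₁.card = k + 1 := by
    have h := sum_eq_of_le (s := A) (f := fun f => f.card - 1) (c := k) hsize_le
      (by rw [hsumA, hA_card]; ring_nf; omega)
    intro e₁ he₁
    have h1 : e₁.card - 1 = k := h e₁ he₁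
    have h2 : 1 ≤ e₁.card := Finset.card_pos.2 ⟨w, (hA_mem e₁ he₁).2⟩
    omega
  -- neighbours of `w` have degree exactly `k`
  have hdeg_eq : ∀ e₁ ∈ A, ∀ u ∈ e₁.erase w, HG.deg E u = k := by
    intro e₁ he₁
    have h1 := hbound e₁ he₁
    have hcard : (e₁.erase w).card = k := by
      rw [Finset.card_erase_of_mem (hA_mem e₁ he₁).2, hsize_eq e₁ he₁]; omega
    have h4 := sq_helper (k := k) (by omega)
    have h := sum_eq_of_ge (s := e₁.erase w) (f := fun u => HG.deg E u - 1) (c := k - 1)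
      (fun u hu => by
        show k - 1 ≤ HG.deg E u - 1
        have := hdeg_erase e₁ he₁ u hu; omega)
      (by rw [hcard]; linarith)
    intro u hu
    have h5 : HG.deg E u - 1 = k - 1 := h u hu
    have := hdeg_erase e₁ he₁ u hu
    omega
  refine ⟨fun f hf hwf => hsize_eq f (Finset.mem_filter.2 ⟨hf, hwf⟩), ?_, ?_⟩
  · intro u hu
    obtain ⟨_, hne, e, heE, hwe, hue⟩ := mem_adj.1 hu
    exact hdeg_eq e (Finset.mem_filter.2 ⟨heE, hwe⟩) u (Finset.mem_erase.2 ⟨hne, hue⟩)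
  -- intersecting: every edge meets every edge through `w`
  · intro f hfE hwf g hgE
    have hfA : f ∈ A := Finset.mem_filter.2 ⟨hfE, hwf⟩
    obtain ⟨B, hBE, hdisj, hBcard, hBmeets, hBmem⟩ := hB f hfA
    have hBcard' : B.card = k * (k - 1) := by
      rw [hBcard]
      have hcard : (f.erase w).card = k := by
        rw [Finset.card_erase_of_mem hwf, hsize_eq f hfA]; omega
      rw [Finset.sum_congr rfl (fun u hu => by rw [hdeg_eq f hfA u hu]),
        Finset.sum_const, hcard, smul_eq_mul]
    have hunion : A ∪ B = E := by
      apply Finset.eq_of_subset_of_card_le (Finset.union_subset hA_sub hBE)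
      rw [Finset.card_union_of_disjoint hdisj, hA_card, hBcard']
      have h4 := sq_helper (k := k) (by omega)
      omega
    have hg' : g ∈ A ∪ B := hunion ▸ hgE
    rcases Finset.mem_union.1 hg' with hgA | hgB
    · exact ⟨w, Finset.mem_inter.2 ⟨(hA_mem g hgA).2, hwf⟩⟩
    · obtain ⟨u, hu, hug⟩ := hBmeets g hgB
      exact ⟨u, Finset.mem_inter.2 ⟨hug, Finset.erase_subset _ _ hu⟩⟩

end HGAux

theorem stmt6 {V : Type*} [DecidableEq V] (k : ℕ) (hk : 0 < k)
    (E : Finset (Finset V)) (hlin : HG.Linear E)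
    (hE : E.card ≤ k ^ 2) (hsize : ∀ e ∈ E, e.card ≤ k ^ 2)
    (hdeg : ∀ u ∈ HG.verts E, k ≤ HG.deg E u)
    (v : V) (hv : v ∈ HG.verts E) (hdv : HG.deg E v = k)
    (hadj : ∀ u ∈ HG.adj E v ∪ {v}, (HG.adj E u).card = k ^ 2) :
    ∀ e ∈ E, ∀ u ∈ HG.verts E, u ∉ e →
      (e.filter (fun w => w ∉ HG.adj E u)).card = 1 := by
  classical
  have hadjv : (HG.adj E v).card = k ^ 2 :=
    hadj v (Finset.mem_union_right _ (Finset.mem_singleton_self v))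
  -- the case k = 1 is contradictory: all edges are singletons, so adj v = ∅ ≠ k²
  by_cases hk2 : 2 ≤ k
  swap
  · exfalso
    have hk1 : k = 1 := by omega
    have : (HG.adj E v).card = 0 := by
      rw [HGAux.card_adj hlin v]
      apply Finset.sum_eq_zero
      intro f hf
      have hfE := (Finset.mem_filter.1 hf).1
      have := hsize f hfE
      rw [hk1] at this
      omega
    rw [hadjv, hk1] at this
    omega
  -- main case
  obtain ⟨e₀, he₀, hv₀⟩ : ∃ e₀ ∈ E, v ∈ e₀ := HGAux.mem_verts_iff.1 hv
  have Kv := HGAux.key hk2 hlin hE hdeg hdv hadjv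
  have Ku : ∀ u ∈ HG.adj E v,
      (∀ f ∈ E, u ∈ f → f.card = k + 1) ∧
      (∀ z ∈ HG.adj E u, HG.deg E z = k) ∧
      (∀ f ∈ E, u ∈ f → ∀ g ∈ E, (g ∩ f).Nonempty) := by
    intro u hu
    exact HGAux.key hk2 hlin hE hdeg (Kv.2.1 u hu)
      (hadj u (Finset.mem_union_left _ hu))
  -- every edge meets e₀
  have hmeet₀ : ∀ g ∈ E, (g ∩ e₀).Nonempty := fun g hg => Kv.2.2 e₀ he₀ hv₀ g hg
  -- every vertex has degree k
  have hdegAll : ∀ z ∈ HG.verts E, HG.deg E z = k := by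
    intro z hz
    obtain ⟨g, hgE, hzg⟩ : ∃ g ∈ E, z ∈ g := HGAux.mem_verts_iff.1 hz
    obtain ⟨x, hx⟩ := hmeet₀ g hgE
    rw [Finset.mem_inter] at hx
    by_cases hxv : x = v
    · rw [hxv] at hx
      by_cases hzv : z = v
      · subst hzv; exact hdv
      · exact Kv.2.1 z (HGAux.mem_adj.2 ⟨hz, hzv, g, hgE, hx.1, hzg⟩)
    · have hxadj : x ∈ HG.adj E v :=
        HGAux.mem_adj.2 ⟨HGAux.mem_verts_of_mem he₀ hx.2, hxv, e₀, he₀, hv₀, hx.2⟩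
      by_cases hzx : z = x
      · subst hzx; exact Kv.2.1 z hxadj
      · exact (Ku x hxadj).2.1 z (HGAux.mem_adj.2 ⟨hz, hzx, g, hgE, hx.1, hzg⟩)
  -- every edge has size k+1
  have hsizeAll : ∀ g ∈ E, g.card = k + 1 := by
    intro g hgE
    obtain ⟨x, hx⟩ := hmeet₀ g hgE
    rw [Finset.mem_inter] at hx
    by_cases hxv : x = v
    · rw [hxv] at hx; exact Kv.1 g hgE hx.1
    · have hxadj : x ∈ HG.adj E v :=
        HGAux.mem_adj.2 ⟨HGAux.mem_verts_of_mem he₀ hx.2, hxv, e₀, he₀, hv₀, hx.2⟩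
      exact (Ku x hxadj).1 g hgE hx.1
  -- any two edges intersect
  have hint : ∀ g ∈ E, ∀ f ∈ E, (g ∩ f).Nonempty := by
    intro g hgE f hfE
    obtain ⟨x, hx⟩ := hmeet₀ f hfE
    rw [Finset.mem_inter] at hx
    by_cases hxv : x = v
    · rw [hxv] at hx; exact Kv.2.2 f hfE hx.1 g hgE
    · have hxadj : x ∈ HG.adj E v :=
        HGAux.mem_adj.2 ⟨HGAux.mem_verts_of_mem he₀ hx.2, hxv, e₀, he₀, hv₀, hx.2⟩
      exact (Ku x hxadj).2.2 f hfE hx.1 g hgE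
  -- final conclusion
  intro e he u hu hue
  have hAcard : (E.filter (fun f => u ∈ f)).card = k := by
    rw [← HGAux.deg_def]; exact hdegAll u hu
  have hfilter_eq : e.filter (fun w => w ∈ HG.adj E u) =
      (E.filter (fun f => u ∈ f)).biUnion (fun f => e ∩ f) := by
    ext z
    simp only [Finset.mem_filter, Finset.mem_biUnion, Finset.mem_inter, HGAux.mem_adj]
    constructor
    · rintro ⟨hze, _, _, f, hfE, huf, hzf⟩
      exact ⟨f, ⟨hfE, huf⟩, hze, hzf⟩
    · rintro ⟨f, ⟨hfE, huf⟩, hze, hzf⟩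
      refine ⟨hze, HGAux.mem_verts_of_mem he hze, ?_, f, hfE, huf, hzf⟩
      rintro rfl; exact hue hze
  have hcard_adj_inter : (e.filter (fun w => w ∈ HG.adj E u)).card = k := by
    rw [hfilter_eq, Finset.card_biUnion]
    · rw [← hAcard]
      rw [Finset.sum_congr rfl (fun f hf => ?_), Finset.sum_const, smul_eq_mul, mul_one]
      · rw [Finset.mem_filter] at hf
        have hfe : f ≠ e := by rintro rfl; exact hue hf.2
        have h1 : (e ∩ f).card ≤ 1 := by
          rw [Finset.inter_comm]
          exact HGAux.linear' hlin f hf.1 e he hfe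
        have h2 : (e ∩ f).Nonempty := hint e he f hf.1
        have := Finset.card_pos.2 h2
        omega
    · intro f₁ h₁ f₂ h₂ hne
      rw [Finset.mem_coe, Finset.mem_filter] at h₁ h₂
      rw [Function.onFun, Finset.disjoint_left]
      intro z hz₁ hz₂
      rw [Finset.mem_inter] at hz₁ hz₂
      have hzu : u ≠ z := by rintro rfl; exact hue hz₁.1
      exact hne (HGAux.eq_of_two_mem hlin h₁.1 h₂.1 hzu h₁.2 hz₁.2 h₂.2 hz₂.2)
  have hsplit := Finset.card_filter_add_card_filter_not
    (s := e) (p := fun w => w ∈ HG.adj E u)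
  rw [hcard_adj_inter, hsizeAll e he] at hsplit
  have : (e.filter (fun w => ¬ w ∈ HG.adj E u)).card = 1 := by omega
  convert this using 2
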